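/- Let s = β + it with β > 0. There exist constants N₀ and the tail R_N(s) = Σ_{n=N+1}^∞ (-1)^{n-1} n^{-s} satisfies (1/4)(N+1)^{-β} ≤ |R_N(s)| ≤ (3/4)(N+1)^{-β} for all N ≥ N₀. -/

import Mathlib

open Filter Topology Finset

private lemma hasDerivAt_real_cpow_neg (w : ℂ) {x : ℝ} (hx : 0 < x) :
    HasDerivAt (fun y : ℝ => (y : ℂ) ^ (-w)) (-w * (x : ℂ) ^ (-w - 1)) x := by
  have h0 : (x : ℂ) ∈ Complex.slitPlane := Or.inl (by simpa using hx)
  exact ((Complex.hasStrictDerivAt_cpow_const (c := -w) h0).hasDerivAt).comp_ofReal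

private lemma norm_cpow_real (w : ℂ) {x : ℝ} (hx : 0 < x) :
    ‖(x : ℂ) ^ w‖ = x ^ w.re := by
  rw [Complex.norm_cpow_eq_rpow_re_of_pos hx]

private lemma norm_hw_le (w : ℂ) (hw : 0 ≤ w.re) {x : ℝ} (hx : 0 < x) :
    ‖(x : ℂ) ^ (-w) - ((x + 1 : ℝ) : ℂ) ^ (-w)‖ ≤ ‖w‖ * x ^ (-w.re - 1) := by
  have hder : ∀ y ∈ Set.Icc x (x + 1), HasDerivWithinAt (fun y : ℝ => (y : ℂ) ^ (-w))
      (-w * (y : ℂ) ^ (-w - 1)) (Set.Icc x (x + 1)) y := fun y hy =>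
    (hasDerivAt_real_cpow_neg w (lt_of_lt_of_le hx hy.1)).hasDerivWithinAt
  have hbound : ∀ y ∈ Set.Icc x (x + 1), ‖-w * (y : ℂ) ^ (-w - 1)‖ ≤ ‖w‖ * x ^ (-w.re - 1) := by
    intro y hy
    have hy0 : 0 < y := lt_of_lt_of_le hx hy.1
    rw [norm_mul, norm_neg, norm_cpow_real _ hy0]
    have h1 : (-w - 1).re = -w.re - 1 := by simp
    rw [h1]
    have := Real.rpow_le_rpow_of_nonpos hx hy.1 (show -w.re - 1 ≤ 0 by linarith)
    exact mul_le_mul_of_nonneg_left this (norm_nonneg w)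
  have key := Convex.norm_image_sub_le_of_norm_hasDerivWithin_le hder hbound (convex_Icc _ _)
    (Set.left_mem_Icc.2 (by linarith)) (Set.right_mem_Icc.2 (by linarith))
  rw [norm_sub_rev]
  simpa using key

private lemma norm_hw2_le (w : ℂ) (hw : 0 ≤ w.re) {x : ℝ} (hx : 0 < x) :
    ‖((x : ℂ) ^ (-w) - ((x + 1 : ℝ) : ℂ) ^ (-w)) -
      (((x + 1 : ℝ) : ℂ) ^ (-w) - ((x + 2 : ℝ) : ℂ) ^ (-w))‖
      ≤ ‖w‖ * ‖w + 1‖ * x ^ (-w.re - 2) := by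
  set g : ℝ → ℂ := fun y => (y : ℂ) ^ (-w) - ((y + 1 : ℝ) : ℂ) ^ (-w) with hg
  set g' : ℝ → ℂ := fun y => -w * ((y : ℂ) ^ (-w - 1) - ((y + 1 : ℝ) : ℂ) ^ (-w - 1)) with hg'
  have hder : ∀ y ∈ Set.Icc x (x + 1), HasDerivWithinAt g (g' y) (Set.Icc x (x + 1)) y := by
    intro y hy
    have hy0 : 0 < y := lt_of_lt_of_le hx hy.1
    have h1 := hasDerivAt_real_cpow_neg w hy0
    have h2 : HasDerivAt (fun y : ℝ => ((y + 1 : ℝ) : ℂ) ^ (-w))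
        (-w * ((y + 1 : ℝ) : ℂ) ^ (-w - 1)) y := by
      have h3 := hasDerivAt_real_cpow_neg w (show (0 : ℝ) < y + 1 by linarith)
      exact h3.comp_add_const y 1
    have h4 := h1.sub h2
    have h5 : g' y = -w * (y : ℂ) ^ (-w - 1) - -w * ((y + 1 : ℝ) : ℂ) ^ (-w - 1) := by
      rw [hg']; ring
    rw [h5]
    exact h4.hasDerivWithinAt
  have hbound : ∀ y ∈ Set.Icc x (x + 1), ‖g' y‖ ≤ ‖w‖ * ‖w + 1‖ * x ^ (-w.re - 2) := by
    intro y hy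
    have hy0 : 0 < y := lt_of_lt_of_le hx hy.1
    have hkey := norm_hw_le (w + 1) (by simp; linarith) hy0
    have hneg : -(w + 1) = -w - 1 := by ring
    have hre : -(w + 1).re - 1 = -w.re - 2 := by simp; ring
    rw [hneg, hre] at hkey
    rw [hg', norm_mul, norm_neg]
    have hmono : y ^ (-w.re - 2) ≤ x ^ (-w.re - 2) :=
      Real.rpow_le_rpow_of_nonpos hx hy.1 (by linarith)
    calc ‖w‖ * ‖(y : ℂ) ^ (-w - 1) - ((y + 1 : ℝ) : ℂ) ^ (-w - 1)‖
        ≤ ‖w‖ * (‖w + 1‖ * y ^ (-w.re - 2)) :=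
          mul_le_mul_of_nonneg_left hkey (norm_nonneg w)
      _ ≤ ‖w‖ * (‖w + 1‖ * x ^ (-w.re - 2)) := by
          have := mul_le_mul_of_nonneg_left hmono (norm_nonneg (w + 1))
          exact mul_le_mul_of_nonneg_left this (norm_nonneg w)
      _ = ‖w‖ * ‖w + 1‖ * x ^ (-w.re - 2) := by ring
  have key := Convex.norm_image_sub_le_of_norm_hasDerivWithin_le hder hbound (convex_Icc _ _)
    (Set.left_mem_Icc.2 (by linarith)) (Set.right_mem_Icc.2 (by linarith))
  rw [norm_sub_rev]
  have e : (x + 1 : ℝ) + 1 = x + 2 := by ring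
  simp only [hg, e] at key
  simpa using key

private lemma abel_identity (b : ℕ → ℂ) (N : ℕ) : ∀ M, N ≤ M →
    2 * ∑ n ∈ Finset.Icc (N + 1) (M + 1), (-1 : ℂ) ^ (n + 1) * b n
      = (-1) ^ N * b (N + 1)
        + ∑ n ∈ Finset.Icc (N + 1) M, (-1 : ℂ) ^ (n + 1) * (b n - b (n + 1))
        + (-1) ^ M * b (M + 1) := by
  intro M hM
  induction M, hM using Nat.le_induction with
  | base =>
    rw [Finset.Icc_self, Finset.sum_singleton, Finset.Icc_eq_empty (by omega),
      Finset.sum_empty]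
    rw [pow_succ, pow_succ]
    ring
  | succ M hM ih =>
    rw [Finset.sum_Icc_succ_top (by omega : N + 1 ≤ M + 1 + 1)]
    conv_rhs => rw [Finset.sum_Icc_succ_top (by omega : N + 1 ≤ M + 1)]
    rw [mul_add, ih]
    simp only [pow_succ]
    ring

private lemma telescope_sum (g : ℕ → ℝ) (N : ℕ) : ∀ M, N ≤ M →
    ∑ n ∈ Finset.Icc (N + 1) M, (g (n - 1) - g n) = g N - g M := by
  intro M hM
  induction M, hM using Nat.le_induction with
  | base => rw [Finset.Icc_eq_empty (by omega), Finset.sum_empty]; ring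
  | succ M hM ih =>
    rw [Finset.sum_Icc_succ_top (by omega : N + 1 ≤ M + 1), ih]
    simp only [Nat.add_sub_cancel]
    ring

private lemma norm_neg_one_pow_mul (k : ℕ) (z : ℂ) : ‖(-1 : ℂ) ^ k * z‖ = ‖z‖ := by
  rw [norm_mul, norm_pow, norm_neg, norm_one, one_pow, one_mul]

theorem tail_bounds (s : ℂ) (hs : 0 < s.re) (R : ℕ → ℂ)
    (hR : ∀ N : ℕ,
      Tendsto (fun M : ℕ => ∑ n ∈ Finset.Icc (N + 1) M, (-1 : ℂ) ^ (n + 1) * (n : ℂ) ^ (-s))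
        atTop (𝓝 (R N))) :
    ∃ N₀ : ℕ, ∀ N ≥ N₀,
      (1 / 4 : ℝ) * ((N : ℝ) + 1) ^ (-s.re) ≤ ‖R N‖ ∧
        ‖R N‖ ≤ (3 / 4 : ℝ) * ((N : ℝ) + 1) ^ (-s.re) := by
  set β := s.re with hβ
  set a : ℕ → ℂ := fun n => (n : ℂ) ^ (-s) with ha
  set c : ℕ → ℂ := fun n => a n - a (n + 1) with hc
  set K : ℝ := ‖s‖ * ‖s + 1‖ with hK
  have hK0 : 0 ≤ K := mul_nonneg (norm_nonneg _) (norm_nonneg _)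
  -- norms of `a`
  have han : ∀ n : ℕ, 1 ≤ n → ‖a n‖ = (n : ℝ) ^ (-β) := by
    intro n hn
    have := Complex.norm_natCast_cpow_of_pos hn (-s)
    simpa [ha, hβ] using this
  -- bound on `c`
  have hcn : ∀ n : ℕ, 1 ≤ n → ‖c n‖ ≤ ‖s‖ * (n : ℝ) ^ (-β - 1) := by
    intro n hn
    have hx : (0 : ℝ) < (n : ℝ) := by exact_mod_cast hn
    have h := norm_hw_le s hs.le hx
    have e1 : (((n : ℝ)) : ℂ) = (n : ℂ) := by push_cast; ring
    have e2 : (((n : ℝ) + 1 : ℝ) : ℂ) = ((n + 1 : ℕ) : ℂ) := by push_cast; ring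
    rw [e1, e2] at h
    simpa [hc, ha, hβ] using h
  -- bound on second differences
  have hdn : ∀ n : ℕ, 1 ≤ n → ‖c n - c (n + 1)‖ ≤ K * (n : ℝ) ^ (-β - 2) := by
    intro n hn
    have hx : (0 : ℝ) < (n : ℝ) := by exact_mod_cast hn
    have h := norm_hw2_le s hs.le hx
    have e1 : (((n : ℝ)) : ℂ) = (n : ℂ) := by push_cast; ring
    have e2 : (((n : ℝ) + 1 : ℝ) : ℂ) = ((n + 1 : ℕ) : ℂ) := by push_cast; ring
    have e3 : (((n : ℝ) + 2 : ℝ) : ℂ) = ((n + 1 + 1 : ℕ) : ℂ) := by push_cast; ring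
    rw [e1, e2, e3] at h
    simpa [hc, ha, hβ, hK] using h
  -- `‖a M‖ → 0`
  have ha0 : Tendsto (fun M : ℕ => ‖a M‖) atTop (𝓝 0) := by
    have h1 : Tendsto (fun x : ℝ => x ^ (-β)) atTop (𝓝 0) := tendsto_rpow_neg_atTop hs
    have h2 : Tendsto (fun M : ℕ => ((M : ℝ)) ^ (-β)) atTop (𝓝 0) :=
      h1.comp tendsto_natCast_atTop_atTop
    refine h2.congr' ?_
    filter_upwards [eventually_ge_atTop 1] with M hM
    exact (han M hM).symm
  -- `‖c M‖ → 0`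
  have hc0 : Tendsto (fun M : ℕ => ‖c M‖) atTop (𝓝 0) := by
    have hsum : Tendsto (fun M : ℕ => ‖a M‖ + ‖a (M + 1)‖) atTop (𝓝 0) := by
      simpa using ha0.add (ha0.comp (tendsto_add_atTop_nat 1))
    refine squeeze_zero (fun M => norm_nonneg _) (fun M => ?_) hsum
    exact norm_sub_le _ _
  -- choose N₀
  refine ⟨⌈‖s‖ + K⌉₊ + 1, fun N hN => ?_⟩
  have hN1 : 1 ≤ N := le_trans (Nat.le_add_left 1 _) hN
  have hNs : ‖s‖ + K ≤ (N : ℝ) := by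
    calc ‖s‖ + K ≤ (⌈‖s‖ + K⌉₊ : ℝ) := Nat.le_ceil _
    _ ≤ (N : ℝ) := by exact_mod_cast le_trans (Nat.le_succ _) hN
  have hNpos : (0 : ℝ) < (N : ℝ) := by exact_mod_cast hN1
  set X : ℝ := ((N : ℝ) + 1) ^ (-β) with hX
  have hXpos : 0 < X := Real.rpow_pos_of_pos (by linarith) _
  -- the limit `T` of the series of `c`'s
  set T : ℂ := 2 * R N - (-1) ^ N * a (N + 1) with hT
  have hSc : Tendsto (fun M : ℕ => ∑ n ∈ Finset.Icc (N + 1) M, (-1 : ℂ) ^ (n + 1) * c n)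
      atTop (𝓝 T) := by
    have heq : ∀ᶠ M in atTop, (fun M : ℕ =>
        2 * ∑ n ∈ Finset.Icc (N + 1) (M + 1), (-1 : ℂ) ^ (n + 1) * a n
          - (-1) ^ N * a (N + 1) - (-1) ^ M * a (M + 1)) M
        = ∑ n ∈ Finset.Icc (N + 1) M, (-1 : ℂ) ^ (n + 1) * c n := by
      filter_upwards [eventually_ge_atTop N] with M hM
      have := abel_identity a N M hM
      simp only [hc]
      linear_combination this
    have h1 : Tendsto (fun M : ℕ =>
        2 * ∑ n ∈ Finset.Icc (N + 1) (M + 1), (-1 : ℂ) ^ (n + 1) * a n) atTop (𝓝 (2 * R N)) :=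
      ((hR N).comp (tendsto_add_atTop_nat 1)).const_mul 2
    have h2 : Tendsto (fun M : ℕ => (-1 : ℂ) ^ M * a (M + 1)) atTop (𝓝 0) := by
      refine squeeze_zero_norm (fun M => ?_) (ha0.comp (tendsto_add_atTop_nat 1))
      rw [norm_neg_one_pow_mul]
      exact le_rfl
    have h3 := (h1.sub (tendsto_const_nhds (x := (-1 : ℂ) ^ N * a (N + 1)))).sub h2
    rw [sub_zero] at h3
    exact Tendsto.congr' heq h3
  -- bound on the partial sums of the `c` series
  have hB : ∀ M, N ≤ M →
      ‖2 * ∑ n ∈ Finset.Icc (N + 1) (M + 1), (-1 : ℂ) ^ (n + 1) * c n‖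
        ≤ (‖s‖ + K) * X * (N : ℝ)⁻¹ + ‖c (M + 1)‖ := by
    intro M hM
    rw [abel_identity c N M hM]
    have hd_sum : ∑ n ∈ Finset.Icc (N + 1) M, ‖(-1 : ℂ) ^ (n + 1) * (c n - c (n + 1))‖
        ≤ K * X * (N : ℝ)⁻¹ := by
      have hterm : ∀ n ∈ Finset.Icc (N + 1) M, ‖(-1 : ℂ) ^ (n + 1) * (c n - c (n + 1))‖
          ≤ K * X * (((n - 1 : ℕ) : ℝ)⁻¹ - ((n : ℕ) : ℝ)⁻¹) := by
        intro n hn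
        rw [Finset.mem_Icc] at hn
        have hn1 : 1 ≤ n := by omega
        have hm2 : (2 : ℝ) ≤ (n : ℝ) := by exact_mod_cast (by omega : 2 ≤ n)
        have hmpos : (0 : ℝ) < (n : ℝ) := by linarith
        rw [norm_neg_one_pow_mul]
        refine le_trans (hdn n hn1) ?_
        have hsplit : (n : ℝ) ^ (-β - 2) = (n : ℝ) ^ (-β) * (n : ℝ) ^ (-(2 : ℝ)) := by
          rw [← Real.rpow_add hmpos]; ring_nf
        have hmono : (n : ℝ) ^ (-β) ≤ X :=
          Real.rpow_le_rpow_of_nonpos (by linarith) (by exact_mod_cast (by omega : N + 1 ≤ n))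
            (by linarith)
        have hsq : (n : ℝ) ^ (-(2 : ℝ)) ≤ ((n - 1 : ℕ) : ℝ)⁻¹ - ((n : ℕ) : ℝ)⁻¹ := by
          have hcast : ((n - 1 : ℕ) : ℝ) = (n : ℝ) - 1 := by
            push_cast [Nat.cast_sub hn1]; ring
          rw [hcast]
          set m : ℝ := (n : ℝ)
          have h1 : (m - 1) * m ≤ m ^ 2 := by nlinarith
          have h2 : (0 : ℝ) < (m - 1) * m := by nlinarith
          have h3 : m ^ (-(2 : ℝ)) = (m ^ 2)⁻¹ := by
            rw [Real.rpow_neg (by linarith), ← Real.rpow_natCast m 2]; norm_num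
          rw [h3]
          have h4 : (m ^ 2)⁻¹ ≤ ((m - 1) * m)⁻¹ := by
            apply inv_anti₀ h2 h1
          refine le_trans h4 (le_of_eq ?_)
          have hm1 : m - 1 ≠ 0 := by linarith
          have hm0 : m ≠ 0 := by linarith
          field_simp
          ring
        calc K * (n : ℝ) ^ (-β - 2) = K * ((n : ℝ) ^ (-β) * (n : ℝ) ^ (-(2 : ℝ))) := by
              rw [hsplit]
          _ ≤ K * (X * (((n - 1 : ℕ) : ℝ)⁻¹ - ((n : ℕ) : ℝ)⁻¹)) := by
              apply mul_le_mul_of_nonneg_left _ hK0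
              apply mul_le_mul hmono hsq (by positivity) hXpos.le
          _ = K * X * (((n - 1 : ℕ) : ℝ)⁻¹ - ((n : ℕ) : ℝ)⁻¹) := by ring
      refine le_trans (Finset.sum_le_sum hterm) ?_
      rw [← Finset.mul_sum]
      have htel := telescope_sum (fun m => ((m : ℕ) : ℝ)⁻¹) N M hM
      rw [htel]
      have : ((N : ℝ))⁻¹ - ((M : ℝ))⁻¹ ≤ ((N : ℝ))⁻¹ := by
        have : (0 : ℝ) ≤ ((M : ℝ))⁻¹ := by positivity
        linarith
      calc K * X * (((N : ℕ) : ℝ)⁻¹ - ((M : ℕ) : ℝ)⁻¹) ≤ K * X * ((N : ℝ))⁻¹ := by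
            apply mul_le_mul_of_nonneg_left this (by positivity)
        _ = K * X * (N : ℝ)⁻¹ := by norm_num
    have hcN : ‖c (N + 1)‖ ≤ ‖s‖ * X * (N : ℝ)⁻¹ := by
      refine le_trans (hcn (N + 1) (by omega)) ?_
      have hpos : (0 : ℝ) < (N : ℝ) + 1 := by linarith
      have hsplit : ((N + 1 : ℕ) : ℝ) ^ (-β - 1)
          = ((N : ℝ) + 1) ^ (-β) * ((N : ℝ) + 1) ^ (-(1 : ℝ)) := by
        push_cast
        rw [← Real.rpow_add hpos]; ring_nf
      rw [hsplit]
      have h5 : ((N : ℝ) + 1) ^ (-(1 : ℝ)) ≤ (N : ℝ)⁻¹ := by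
        rw [Real.rpow_neg_one]
        exact inv_anti₀ hNpos (by linarith)
      calc ‖s‖ * (((N : ℝ) + 1) ^ (-β) * ((N : ℝ) + 1) ^ (-(1 : ℝ)))
          ≤ ‖s‖ * (X * (N : ℝ)⁻¹) := by
            apply mul_le_mul_of_nonneg_left _ (norm_nonneg s)
            exact mul_le_mul_of_nonneg_left h5 hXpos.le
        _ = ‖s‖ * X * (N : ℝ)⁻¹ := by ring
    calc ‖(-1 : ℂ) ^ N * c (N + 1)
          + ∑ n ∈ Finset.Icc (N + 1) M, (-1 : ℂ) ^ (n + 1) * (c n - c (n + 1))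
          + (-1) ^ M * c (M + 1)‖
        ≤ ‖(-1 : ℂ) ^ N * c (N + 1)
            + ∑ n ∈ Finset.Icc (N + 1) M, (-1 : ℂ) ^ (n + 1) * (c n - c (n + 1))‖
          + ‖(-1 : ℂ) ^ M * c (M + 1)‖ := norm_add_le _ _
      _ ≤ ‖(-1 : ℂ) ^ N * c (N + 1)‖
          + ‖∑ n ∈ Finset.Icc (N + 1) M, (-1 : ℂ) ^ (n + 1) * (c n - c (n + 1))‖
          + ‖(-1 : ℂ) ^ M * c (M + 1)‖ := by
            have := norm_add_le ((-1 : ℂ) ^ N * c (N + 1))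
              (∑ n ∈ Finset.Icc (N + 1) M, (-1 : ℂ) ^ (n + 1) * (c n - c (n + 1)))
            linarith
      _ ≤ ‖s‖ * X * (N : ℝ)⁻¹ + K * X * (N : ℝ)⁻¹ + ‖c (M + 1)‖ := by
            have hns := norm_sum_le (Finset.Icc (N + 1) M)
              (fun n => (-1 : ℂ) ^ (n + 1) * (c n - c (n + 1)))
            have h6 := le_trans hns hd_sum
            simp only [norm_neg_one_pow_mul]
            linarith [hcN, h6]
      _ = (‖s‖ + K) * X * (N : ℝ)⁻¹ + ‖c (M + 1)‖ := by ring
  -- pass to the limit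
  have hTbound : ‖2 * T‖ ≤ (‖s‖ + K) * X * (N : ℝ)⁻¹ := by
    have hlim1 : Tendsto (fun M : ℕ =>
        ‖2 * ∑ n ∈ Finset.Icc (N + 1) (M + 1), (-1 : ℂ) ^ (n + 1) * c n‖) atTop (𝓝 ‖2 * T‖) :=
      (((hSc.comp (tendsto_add_atTop_nat 1)).const_mul 2).norm)
    have hlim2 : Tendsto (fun M : ℕ => (‖s‖ + K) * X * (N : ℝ)⁻¹ + ‖c (M + 1)‖) atTop
        (𝓝 ((‖s‖ + K) * X * (N : ℝ)⁻¹)) := by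
      have := (hc0.comp (tendsto_add_atTop_nat 1)).const_add ((‖s‖ + K) * X * (N : ℝ)⁻¹)
      simpa using this
    refine le_of_tendsto_of_tendsto hlim1 hlim2 ?_
    filter_upwards [eventually_ge_atTop N] with M hM
    exact hB M hM
  -- conclude
  have hTX : ‖T‖ ≤ X / 2 := by
    have h2T : ‖2 * T‖ = 2 * ‖T‖ := by
      rw [norm_mul]; norm_num
    have hfrac : (‖s‖ + K) * X * (N : ℝ)⁻¹ ≤ X := by
      have h7 : (‖s‖ + K) * (N : ℝ)⁻¹ ≤ 1 := by
        rw [← div_eq_mul_inv, div_le_one hNpos]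
        exact hNs
      calc (‖s‖ + K) * X * (N : ℝ)⁻¹ = ((‖s‖ + K) * (N : ℝ)⁻¹) * X := by ring
        _ ≤ 1 * X := mul_le_mul_of_nonneg_right h7 hXpos.le
        _ = X := one_mul X
    rw [h2T] at hTbound
    linarith [le_trans hTbound hfrac]
  have haN : ‖(-1 : ℂ) ^ N * a (N + 1)‖ = X := by
    rw [norm_neg_one_pow_mul, han (N + 1) (by omega)]
    rw [hX]; push_cast; ring_nf
  have h2RN : 2 * R N = (-1) ^ N * a (N + 1) + T := by rw [hT]; ring
  have h2RNnorm : ‖2 * R N‖ = 2 * ‖R N‖ := by rw [norm_mul]; norm_num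
  constructor
  · -- lower bound
    have hlow : X - X / 2 ≤ ‖2 * R N‖ := by
      have := norm_sub_norm_le ((-1 : ℂ) ^ N * a (N + 1)) (-T)
      rw [h2RN]
      have h8 : ‖(-1 : ℂ) ^ N * a (N + 1) + T‖
          ≥ ‖(-1 : ℂ) ^ N * a (N + 1)‖ - ‖T‖ := by
        have := norm_add_le ((-1 : ℂ) ^ N * a (N + 1) + T) (-T)
        simp only [add_neg_cancel_right] at this
        rw [norm_neg] at this
        linarith
      rw [haN] at h8
      linarith
    rw [h2RNnorm] at hlow
    calc (1 / 4 : ℝ) * ((N : ℝ) + 1) ^ (-s.re) = (X - X / 2) / 2 := by rw [hX, ← hβ]; ring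
      _ ≤ ‖R N‖ := by linarith
  · -- upper bound
    have hup : ‖2 * R N‖ ≤ X + X / 2 := by
      rw [h2RN]
      refine le_trans (norm_add_le _ _) ?_
      rw [haN]
      linarith
    rw [h2RNnorm] at hup
    calc ‖R N‖ ≤ (X + X / 2) / 2 := by linarith
      _ = (3 / 4 : ℝ) * ((N : ℝ) + 1) ^ (-s.re) := by rw [hX, ← hβ]; ring
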